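/- Let h : X × Y → {0,1} with X, Y finite. The correlation P(a,b|x,y) = (1/2)·[a ⊕ b = h(x,y)] can be simulated using |Y| PR boxes and 0 bits of communication at the level of outcome structure: if for each i ∈ Y Alice inputs h(x, i) and Bob inputs [i = y] into the i-th PR box with outputs a_i, b_i, then setting a = XOR_i a_i and b = XOR_i b_i yields a ⊕ b = XOR_i (a_i ⊕ b_i) = XOR_i h(x,i)·[i = y] = h(x,y), and a, b are each uniformly distributed. -/

import Mathlib

theorem pr_simulation_of_xor_boxes {X Y : Type*} [Fintype Y] [DecidableEq Y]
    (h : X → Y → ZMod 2) (x : X) (y : Y) :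
    (∀ a b : Y → ZMod 2,
      (∀ i, a i + b i = h x i * (if i = y then 1 else 0)) →
        (∑ i, a i) + (∑ i, b i) = h x y) ∧
    (Nonempty Y → ∀ c : ZMod 2,
      (∑ a : Y → ZMod 2, ((1:ℝ)/2^(Fintype.card Y)) *
        (if (∑ i, a i) = c then 1 else 0)) = 1/2) := by
  constructor
  · intro a b hab
    rw [← Finset.sum_add_distrib]
    calc ∑ i, (a i + b i) = ∑ i, h x i * (if i = y then 1 else 0) :=
          Finset.sum_congr rfl (fun i _ => hab i)
      _ = ∑ i, (if i = y then h x i else 0) := by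
          apply Finset.sum_congr rfl; intro i _; split <;> simp
      _ = h x y := by simp
  · rintro ⟨y0⟩ c
    set n := Fintype.card Y with hn
    clear_value n
    have hne : Nonempty Y := ⟨y0⟩
    have hnpos : 0 < n := hn ▸ Fintype.card_pos
    -- counting
    set f : (Y → ZMod 2) → (Y → ZMod 2) :=
      fun a i => a i + if i = y0 then 1 else 0 with hf
    have hsum : ∀ a : Y → ZMod 2, ∑ i, f a i = (∑ i, a i) + 1 := by
      intro a
      rw [Finset.sum_add_distrib]
      simp
    have hcardeq : ∀ d : ZMod 2,
        (Finset.univ.filter (fun a : Y → ZMod 2 => ∑ i, a i = d)).card =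
        (Finset.univ.filter (fun a : Y → ZMod 2 => ∑ i, a i = d + 1)).card := by
      intro d
      apply Finset.card_bij (fun a _ => f a)
      · intro a ha
        simp only [Finset.mem_filter, Finset.mem_univ, true_and] at ha ⊢
        rw [hsum, ha]
      · intro a ha b hb hfab
        funext i
        have := congrFun hfab i
        simp only [hf] at this
        exact add_right_cancel this
      · intro b hb
        refine ⟨f b, ?_, ?_⟩
        · simp only [Finset.mem_filter, Finset.mem_univ, true_and] at hb ⊢
          rw [hsum, hb, add_assoc]
          simp [show (1 + 1 : ZMod 2) = 0 from rfl]
        · funext i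
          simp only [hf]
          rw [add_assoc]
          have : ∀ z : ZMod 2, z + z = 0 := by decide
          split <;> simp [this]
    have htot : (Finset.univ.filter (fun a : Y → ZMod 2 => ∑ i, a i = c)).card +
        (Finset.univ.filter (fun a : Y → ZMod 2 => ∑ i, a i = c + 1)).card = 2 ^ n := by
      have hneg : ∀ a : Y → ZMod 2, (¬ (∑ i, a i = c)) ↔ (∑ i, a i = c + 1) := by
        intro a
        generalize (∑ i, a i) = d
        revert c d; decide
      rw [← Finset.filter_congr (fun a _ => (hneg a))]
      rw [Finset.card_filter_add_card_filter_not]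
      simp [hn, Fintype.card_fun]
    have hcard : (Finset.univ.filter (fun a : Y → ZMod 2 => ∑ i, a i = c)).card
        = 2 ^ (n - 1) := by
      have h1 := hcardeq c
      generalize hA : (Finset.univ.filter (fun a : Y → ZMod 2 => ∑ i, a i = c)).card = A at *
      generalize hB : (Finset.univ.filter (fun a : Y → ZMod 2 => ∑ i, a i = c + 1)).card = B at *
      have h2n : 2 ^ n = 2 * 2 ^ (n - 1) := by
        rw [← pow_succ']
        congr 1
        clear * - hnpos
        omega
      clear * - h1 htot h2n
      omega
    -- now the real computation
    rw [← Finset.mul_sum, Finset.sum_boole, hcard]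
    have h2 : (2:ℝ) ^ n = 2 * 2 ^ (n - 1) := by
      rw [← pow_succ']
      congr 1
      clear * - hnpos
      omega
    rw [h2]
    push_cast
    field_simp
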